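/- Let 0 < a < 1 and α > 0 with α ≠ 1, α + a ≠ 1. For 1 < t < 5/4 and 0 < x_n < 1/2 define Ψ̃(t) = ∫_0^1 (t-s)^{-α} exp(-x_n²/(4(t-s))) (1-s)^{-a} ds. Then there exists c > 1 such that, writing M = max(t-1, x_n²): if α + a > 1 then c^{-1} M^{1-α-a} ≤ Ψ̃(t) ≤ c M^{1-α-a}, and if α + a < 1 then c^{-1} ≤ Ψ̃(t) ≤ c. -/

import Mathlib

open Real intervalIntegral MeasureTheory

/-- `e^{-y} ≤ α^α e^{-α} y^{-α}` for `y > 0`. -/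
lemma aux_exp_decay (α : ℝ) (hα : 0 < α) {y : ℝ} (hy : 0 < y) :
    Real.exp (-y) ≤ α ^ α * Real.exp (-α) * y ^ (-α) := by
  rw [Real.rpow_def_of_pos hα, Real.rpow_def_of_pos hy, ← Real.exp_add, ← Real.exp_add]
  rw [Real.exp_le_exp]
  have h := Real.log_le_sub_one_of_pos (x := y / α) (by positivity)
  rw [Real.log_div hy.ne' hα.ne'] at h
  have h2 := mul_le_mul_of_nonneg_left h hα.le
  have h3 : α * (y / α - 1) = y - α := by field_simp
  nlinarith

lemma aux_kernel_bound (α : ℝ) (hα : 0 < α) {v m : ℝ} (hv : 0 < v) (hm : 0 < m) :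
    v ^ (-α) * Real.exp (-m / (4 * v)) ≤ (α ^ α * 4 ^ α) * m ^ (-α) := by
  have hy : 0 < m / (4 * v) := by positivity
  have h1 : Real.exp (-m / (4 * v)) ≤ α ^ α * Real.exp (-α) * (m / (4 * v)) ^ (-α) := by
    rw [neg_div]; exact aux_exp_decay α hα hy
  have hv' : (0:ℝ) ≤ v ^ (-α) := Real.rpow_nonneg hv.le _
  have h2 : v ^ (-α) * (m / (4 * v)) ^ (-α) = 4 ^ α * m ^ (-α) := by
    rw [← Real.mul_rpow hv.le hy.le]
    have : v * (m / (4 * v)) = m / 4 := by field_simp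
    rw [this, Real.div_rpow hm.le (by norm_num : (0:ℝ) ≤ 4), Real.rpow_neg hm.le,
      Real.rpow_neg (by norm_num : (0:ℝ) ≤ 4)]
    field_simp
  calc v ^ (-α) * Real.exp (-m / (4 * v))
      ≤ v ^ (-α) * (α ^ α * Real.exp (-α) * (m / (4 * v)) ^ (-α)) :=
        mul_le_mul_of_nonneg_left h1 hv'
    _ = (α ^ α * Real.exp (-α)) * (v ^ (-α) * (m / (4 * v)) ^ (-α)) := by ring
    _ = (α ^ α * Real.exp (-α)) * (4 ^ α * m ^ (-α)) := by rw [h2]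
    _ ≤ (α ^ α * 1) * (4 ^ α * m ^ (-α)) := by
        apply mul_le_mul_of_nonneg_right
        · exact mul_le_mul_of_nonneg_left (Real.exp_le_one_iff.2 (by linarith)) (Real.rpow_nonneg hα.le _)
        · positivity
    _ = (α ^ α * 4 ^ α) * m ^ (-α) := by ring

lemma aux_int_one_sub (a : ℝ) (ha1 : a < 1) :
    IntervalIntegrable (fun s : ℝ => (1 - s) ^ (-a)) volume 0 1 := by
  have h := (intervalIntegrable_rpow' (a := 1) (b := 0) (r := -a) (by linarith)).comp_sub_left 1
  simpa using h

lemma aux_lower (f : ℝ → ℝ) (p q m : ℝ) (h0 : 0 ≤ p) (hpq : p ≤ q) (hq : q ≤ 1)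
    (hint : IntervalIntegrable f volume 0 1)
    (hnn : ∀ s ∈ Set.Icc (0:ℝ) 1, 0 ≤ f s)
    (hm : ∀ s ∈ Set.Icc p q, m ≤ f s) :
    (q - p) * m ≤ ∫ s in (0:ℝ)..1, f s := by
  have hq1 : q ≤ 1 := hq
  have hsub1 : Set.uIcc 0 p ⊆ Set.uIcc (0:ℝ) 1 := by
    rw [Set.uIcc_of_le h0, Set.uIcc_of_le zero_le_one]
    exact Set.Icc_subset_Icc le_rfl (hpq.trans hq)
  have hsub2 : Set.uIcc p q ⊆ Set.uIcc (0:ℝ) 1 := by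
    rw [Set.uIcc_of_le hpq, Set.uIcc_of_le zero_le_one]
    exact Set.Icc_subset_Icc h0 hq
  have hsub3 : Set.uIcc q 1 ⊆ Set.uIcc (0:ℝ) 1 := by
    rw [Set.uIcc_of_le hq, Set.uIcc_of_le zero_le_one]
    exact Set.Icc_subset_Icc (h0.trans hpq) le_rfl
  have i1 := hint.mono_set hsub1
  have i2 := hint.mono_set hsub2
  have i3 := hint.mono_set hsub3
  have split : (∫ s in (0:ℝ)..1, f s) =
      (∫ s in (0:ℝ)..p, f s) + (∫ s in p..q, f s) + (∫ s in q..(1:ℝ), f s) := by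
    rw [← integral_add_adjacent_intervals (i1.trans i2) i3, ← integral_add_adjacent_intervals i1 i2]
  have e1 : 0 ≤ ∫ s in (0:ℝ)..p, f s :=
    integral_nonneg h0 fun u hu => hnn u ⟨hu.1, hu.2.trans (hpq.trans hq)⟩
  have e3 : 0 ≤ ∫ s in q..(1:ℝ), f s :=
    integral_nonneg hq fun u hu => hnn u ⟨(h0.trans (hpq.trans hu.1)), hu.2⟩
  have e2 : (q - p) * m ≤ ∫ s in p..q, f s := by
    have := integral_mono_on (μ := MeasureTheory.volume) hpq (_root_.intervalIntegrable_const (c := m)) i2 hm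
    rwa [intervalIntegral.integral_const, smul_eq_mul] at this
  linarith

lemma aux_int_f (a α t xn : ℝ) (ha1 : a < 1) (ht : 1 < t) :
    IntervalIntegrable
      (fun s => (t - s) ^ (-α) * Real.exp (-xn ^ 2 / (4 * (t - s))) * (1 - s) ^ (-a))
      volume 0 1 := by
  have hts : ∀ s ∈ Set.uIcc (0:ℝ) 1, t - s ≠ 0 := by
    intro s hs
    rw [Set.uIcc_of_le zero_le_one] at hs
    have := hs.2
    intro h; nlinarith
  have hg : ContinuousOn (fun s : ℝ => (t - s) ^ (-α) * Real.exp (-xn ^ 2 / (4 * (t - s))))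
      (Set.uIcc 0 1) := by
    apply ContinuousOn.mul
    · exact (continuousOn_const.sub continuousOn_id).rpow_const fun s hs => Or.inl (hts s hs)
    · apply ContinuousOn.rexp
      apply ContinuousOn.div continuousOn_const
        (continuousOn_const.mul (continuousOn_const.sub continuousOn_id))
      intro s hs
      have := hts s hs
      intro h
      apply this
      have : (4:ℝ) * (t - s) = 0 := h
      linarith [this]
  exact (aux_int_one_sub a ha1).continuousOn_mul hg

lemma aux_P1 (a α t xn : ℝ) (ha0 : 0 < a) (hα : 0 < α) (ht : 1 < t) :
    ∀ s ∈ Set.Icc (0:ℝ) 1,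
      (t - s) ^ (-α) * Real.exp (-xn ^ 2 / (4 * (t - s))) * (1 - s) ^ (-a) ≤
        (1 - s) ^ (-α - a) := by
  intro s hs
  rcases eq_or_lt_of_le hs.2 with h1 | h1
  · rw [← h1]
    norm_num
    rw [Real.zero_rpow (by linarith : -a ≠ 0), Real.zero_rpow (by linarith : -α - a ≠ 0)]
    simp
  · have h1s : 0 < 1 - s := by linarith
    have hts : 0 < t - s := by linarith
    have e1 : (t - s) ^ (-α) ≤ (1 - s) ^ (-α) :=
      Real.rpow_le_rpow_of_nonpos h1s (by linarith) (by linarith)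
    have e2 : Real.exp (-xn ^ 2 / (4 * (t - s))) ≤ 1 := by
      apply Real.exp_le_one_iff.2
      rw [neg_div]
      simp only [neg_nonpos]
      positivity
    calc (t - s) ^ (-α) * Real.exp (-xn ^ 2 / (4 * (t - s))) * (1 - s) ^ (-a)
        ≤ (1 - s) ^ (-α) * 1 * (1 - s) ^ (-a) := by
          apply mul_le_mul_of_nonneg_right _ (Real.rpow_nonneg h1s.le _)
          exact mul_le_mul e1 e2 (Real.exp_pos _).le (Real.rpow_nonneg h1s.le _)
      _ = (1 - s) ^ (-α + -a) := by rw [Real.rpow_add h1s]; ring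
      _ = (1 - s) ^ (-α - a) := by ring_nf

lemma aux_nonneg (a α t xn : ℝ) (ht : 1 < t) :
    ∀ s ∈ Set.Icc (0:ℝ) 1,
      0 ≤ (t - s) ^ (-α) * Real.exp (-xn ^ 2 / (4 * (t - s))) * (1 - s) ^ (-a) := by
  intro s hs
  have h1 : (0:ℝ) ≤ t - s := by linarith [hs.2]
  have h2 : (0:ℝ) ≤ 1 - s := by linarith [hs.2]
  exact mul_nonneg (mul_nonneg (Real.rpow_nonneg h1 _) (Real.exp_pos _).le)
    (Real.rpow_nonneg h2 _)

lemma aux_inv_le {c L : ℝ} (hL : 0 < L) (hc : 0 < c) (h : L⁻¹ ≤ c) : c⁻¹ ≤ L := by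
  rw [inv_eq_one_div, div_le_iff₀ hc]
  rw [inv_eq_one_div, div_le_iff₀ hL] at h
  nlinarith

lemma caseB (a α : ℝ) (ha0 : 0 < a) (ha1 : a < 1) (hα : 0 < α) (hlt : α + a < 1) :
    ∃ c : ℝ, 1 < c ∧ ∀ t xn : ℝ, 1 < t → t < 5/4 → 0 < xn → xn < 1/2 →
      c⁻¹ ≤ (∫ s in (0:ℝ)..1,
          (t - s) ^ (-α) * Real.exp (-xn ^ 2 / (4 * (t - s))) * (1 - s) ^ (-a)) ∧
      (∫ s in (0:ℝ)..1,
          (t - s) ^ (-α) * Real.exp (-xn ^ 2 / (4 * (t - s))) * (1 - s) ^ (-a)) ≤ c := by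
  have h1aa : (0:ℝ) < 1 - α - a := by linarith
  have hp1 : (0:ℝ) < 2 * (5/4 : ℝ) ^ α * Real.exp 1 := by positivity
  have hp2 : (0:ℝ) < 1 / (1 - α - a) := by positivity
  set c : ℝ := 2 * (5/4 : ℝ) ^ α * Real.exp 1 + 1 / (1 - α - a) + 2 with hc_def
  have hc1 : 1 < c := by rw [hc_def]; linarith
  have hc0 : 0 < c := by linarith
  refine ⟨c, hc1, ?_⟩
  intro t xn ht1 ht2 hx0 hx2
  have hint := aux_int_f a α t xn ha1 ht1
  have hxn2 : xn ^ 2 < 1/4 := by nlinarith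
  constructor
  · -- lower bound
    set L : ℝ := (1/2 : ℝ) * ((5/4 : ℝ) ^ (-α) * Real.exp (-(1/8 : ℝ))) with hL_def
    have hL0 : 0 < L := by positivity
    have hlow := aux_lower _ 0 (1/2) ((5/4 : ℝ) ^ (-α) * Real.exp (-(1/8 : ℝ)))
      le_rfl (by norm_num) (by norm_num) hint (aux_nonneg a α t xn ht1) ?_
    · have hLc : L⁻¹ ≤ c := by
        have e1 : L⁻¹ = 2 * (5/4 : ℝ) ^ α * Real.exp (1/8) := by
          rw [hL_def, Real.rpow_neg (by norm_num : (0:ℝ) ≤ 5/4), Real.exp_neg]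
          have h54 : (0:ℝ) < (5/4 : ℝ) ^ α := Real.rpow_pos_of_pos (by norm_num) _
          have he : (0:ℝ) < Real.exp (1/8) := Real.exp_pos _
          field_simp
        rw [e1]
        have : Real.exp (1/8) ≤ Real.exp 1 := Real.exp_le_exp.2 (by norm_num)
        have h54 : (0:ℝ) < (5/4 : ℝ) ^ α := Real.rpow_pos_of_pos (by norm_num) _
        rw [hc_def]
        nlinarith
      have := aux_inv_le hL0 hc0 hLc
      calc c⁻¹ ≤ L := this
        _ = (1/2 - 0) * ((5/4 : ℝ) ^ (-α) * Real.exp (-(1/8 : ℝ))) := by rw [hL_def]; ring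
        _ ≤ _ := hlow
    · intro s hs
      have hts : (0:ℝ) < t - s := by linarith [hs.2]
      have h1s : (0:ℝ) < 1 - s := by linarith [hs.2]
      have e1 : (5/4 : ℝ) ^ (-α) ≤ (t - s) ^ (-α) :=
        Real.rpow_le_rpow_of_nonpos hts (by linarith [hs.1]) (by linarith)
      have e2 : Real.exp (-(1/8 : ℝ)) ≤ Real.exp (-xn ^ 2 / (4 * (t - s))) := by
        apply Real.exp_le_exp.2
        rw [neg_div, neg_le_neg_iff, div_le_iff₀ (by linarith : (0:ℝ) < 4 * (t - s))]
        nlinarith [hs.2]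
      have e3 : (1:ℝ) ≤ (1 - s) ^ (-a) := by
        have := Real.rpow_le_rpow_of_nonpos h1s (by linarith [hs.1] : 1 - s ≤ 1) (by linarith : -a ≤ 0)
        rwa [Real.one_rpow] at this
      calc (5/4 : ℝ) ^ (-α) * Real.exp (-(1/8 : ℝ))
          = ((5/4 : ℝ) ^ (-α) * Real.exp (-(1/8 : ℝ))) * 1 := by ring
        _ ≤ (t - s) ^ (-α) * Real.exp (-xn ^ 2 / (4 * (t - s))) * (1 - s) ^ (-a) := by
            apply mul_le_mul _ e3 zero_le_one
              (mul_nonneg (Real.rpow_nonneg hts.le _) (Real.exp_pos _).le)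
            exact mul_le_mul e1 e2 (Real.exp_pos _).le (Real.rpow_nonneg hts.le _)
  · -- upper bound
    have hb : IntervalIntegrable (fun s : ℝ => (1 - s) ^ (-α - a)) volume 0 1 := by
      have := (intervalIntegrable_rpow' (a := 1) (b := 0)
        (r := -α - a) (by linarith)).comp_sub_left 1
      simpa using this
    have hmono := integral_mono_on zero_le_one hint hb (aux_P1 a α t xn ha0 hα ht1)
    have hval : (∫ s in (0:ℝ)..1, (1 - s) ^ (-α - a)) = 1 / (1 - α - a) := by
      rw [show (fun s : ℝ => (1 - s) ^ (-α - a)) = (fun x : ℝ => x ^ (-α - a)) ∘ (fun s => 1 - s)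
        from rfl]
      rw [show (∫ s in (0:ℝ)..1, ((fun x : ℝ => x ^ (-α - a)) ∘ (fun s => 1 - s)) s)
        = ∫ x in (1-(1:ℝ))..(1-(0:ℝ)), x ^ (-α - a) from
          integral_comp_sub_left (fun x : ℝ => x ^ (-α - a)) 1]
      norm_num
      rw [integral_rpow (Or.inl (by linarith : (-1:ℝ) < -α - a))]
      rw [Real.one_rpow, Real.zero_rpow (by linarith : -α - a + 1 ≠ 0)]
      rw [show -α - a + 1 = 1 - α - a by ring]
      ring
    rw [hval] at hmono
    refine hmono.trans ?_
    rw [hc_def]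
    linarith

set_option maxHeartbeats 2000000 in
lemma caseA (a α : ℝ) (ha0 : 0 < a) (ha1 : a < 1) (hα : 0 < α) (hgt : 1 < α + a) :
    ∃ c : ℝ, 1 < c ∧ ∀ t xn : ℝ, 1 < t → t < 5/4 → 0 < xn → xn < 1/2 →
      c⁻¹ * (max (t - 1) (xn ^ 2)) ^ (1 - α - a) ≤
        (∫ s in (0:ℝ)..1,
          (t - s) ^ (-α) * Real.exp (-xn ^ 2 / (4 * (t - s))) * (1 - s) ^ (-a)) ∧
      (∫ s in (0:ℝ)..1,
          (t - s) ^ (-α) * Real.exp (-xn ^ 2 / (4 * (t - s))) * (1 - s) ^ (-a)) ≤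
        c * (max (t - 1) (xn ^ 2)) ^ (1 - α - a) := by
  have h1a : (0:ℝ) < 1 - a := by linarith
  have hd : (0:ℝ) < α + a - 1 := by linarith
  set K : ℝ := α ^ α * 4 ^ α + 1 with hK_def
  clear_value K
  have hK1 : (1:ℝ) ≤ K := by
    have : (0:ℝ) ≤ α ^ α * 4 ^ α := by positivity
    rw [hK_def]; linarith
  have hK0 : (0:ℝ) < K := by linarith
  have hp1 : (0:ℝ) < 3 ^ α * 2 ^ a * Real.exp 1 := by positivity
  have hp2 : (0:ℝ) < K / (1 - a) := by positivity
  have hp3 : (0:ℝ) < 1 / (α + a - 1) := by positivity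
  set c : ℝ := 3 ^ α * 2 ^ a * Real.exp 1 + K / (1 - a) + 1 / (α + a - 1) + 2 with hc_def
  clear_value c
  have hc1 : 1 < c := by rw [hc_def]; linarith
  have hc0 : 0 < c := by linarith
  refine ⟨c, hc1, ?_⟩
  intro t xn ht1 ht2 hx0 hx2
  have hint := aux_int_f a α t xn ha1 ht1
  have hxn2 : xn ^ 2 < 1/4 := by nlinarith
  set M : ℝ := max (t - 1) (xn ^ 2) with hM_def
  clear_value M
  have hM0 : 0 < M := by rw [hM_def]; exact lt_max_of_lt_left (by linarith)
  have hM4 : M < 1/4 := by rw [hM_def]; exact max_lt (by linarith) hxn2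
  have hεM : t - 1 ≤ M := by rw [hM_def]; exact le_max_left _ _
  have hxM : xn ^ 2 ≤ M := by rw [hM_def]; exact le_max_right _ _
  have hX0 : (0:ℝ) < M ^ (1 - α - a) := Real.rpow_pos_of_pos hM0 _
  set X : ℝ := M ^ (1 - α - a) with hX_def
  clear_value X
  constructor
  · -- lower bound
    set L : ℝ := 3 ^ (-α) * 2 ^ (-a) * Real.exp (-(1/4 : ℝ)) with hL_def
    have hL0 : 0 < L := by rw [hL_def]; positivity
    clear_value L
    have hlow := aux_lower _ (1 - 2*M) (1 - M)
      ((3*M) ^ (-α) * Real.exp (-(1/4 : ℝ)) * (2*M) ^ (-a))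
      (by linarith) (by linarith) (by linarith) hint (aux_nonneg a α t xn ht1) ?_
    · have key : ((1 - M) - (1 - 2*M)) * ((3*M) ^ (-α) * Real.exp (-(1/4 : ℝ)) * (2*M) ^ (-a))
          = L * X := by
        rw [Real.mul_rpow (by norm_num : (0:ℝ) ≤ 3) hM0.le,
          Real.mul_rpow (by norm_num : (0:ℝ) ≤ 2) hM0.le, hL_def, hX_def]
        have e1 : ((1 - M) - (1 - 2*M)) = M := by ring
        rw [e1]
        have e2 : M * (3 ^ (-α) * M ^ (-α) * Real.exp (-(1/4:ℝ)) * (2 ^ (-a) * M ^ (-a)))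
            = (3 ^ (-α) * 2 ^ (-a) * Real.exp (-(1/4:ℝ))) * (M ^ (1:ℝ) * M ^ (-α) * M ^ (-a)) := by
          rw [Real.rpow_one]; ring
        rw [e2, ← Real.rpow_add hM0, ← Real.rpow_add hM0]
        norm_num
        left
        ring
      rw [key] at hlow
      have hLc : L⁻¹ ≤ c := by
        have h3 : (0:ℝ) < 3 ^ α := Real.rpow_pos_of_pos (by norm_num) _
        have h2 : (0:ℝ) < 2 ^ a := Real.rpow_pos_of_pos (by norm_num) _
        have e1 : L⁻¹ = 3 ^ α * 2 ^ a * Real.exp (1/4) := by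
          rw [hL_def, Real.rpow_neg (by norm_num : (0:ℝ) ≤ 3),
            Real.rpow_neg (by norm_num : (0:ℝ) ≤ 2), Real.exp_neg]
          have he : (0:ℝ) < Real.exp (1/4) := Real.exp_pos _
          field_simp
        rw [e1]
        have h9 : Real.exp (1/4) ≤ Real.exp 1 := Real.exp_le_exp.2 (by norm_num)
        have h10 := mul_le_mul_of_nonneg_left h9 (by positivity : (0:ℝ) ≤ 3 ^ α * 2 ^ a)
        rw [hc_def]
        nlinarith [h10]
      have := aux_inv_le hL0 hc0 hLc
      calc c⁻¹ * X ≤ L * X := mul_le_mul_of_nonneg_right this hX0.le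
        _ ≤ _ := hlow
    · intro s hs
      have hs1 : M ≤ 1 - s := by linarith [hs.2]
      have hs2 : 1 - s ≤ 2*M := by linarith [hs.1]
      have hts0 : 0 < t - s := by linarith
      have h1s0 : 0 < 1 - s := by linarith
      have hts3 : t - s ≤ 3*M := by linarith
      have e1 : (3*M) ^ (-α) ≤ (t - s) ^ (-α) :=
        Real.rpow_le_rpow_of_nonpos hts0 hts3 (by linarith)
      have e2 : Real.exp (-(1/4 : ℝ)) ≤ Real.exp (-xn ^ 2 / (4 * (t - s))) := by
        apply Real.exp_le_exp.2
        rw [neg_div, neg_le_neg_iff, div_le_iff₀ (by linarith : (0:ℝ) < 4 * (t - s))]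
        linarith
      have e3 : (2*M) ^ (-a) ≤ (1 - s) ^ (-a) :=
        Real.rpow_le_rpow_of_nonpos h1s0 hs2 (by linarith)
      apply mul_le_mul _ e3 (Real.rpow_nonneg (by linarith) _)
        (mul_nonneg (Real.rpow_nonneg hts0.le _) (Real.exp_pos _).le)
      exact mul_le_mul e1 e2 (Real.exp_pos _).le (Real.rpow_nonneg hts0.le _)
  · -- upper bound
    have hM1 : M ≤ 1 := by linarith
    have hsubA : Set.uIcc 0 (1 - M) ⊆ Set.uIcc (0:ℝ) 1 := by
      rw [Set.uIcc_of_le (by linarith : (0:ℝ) ≤ 1 - M), Set.uIcc_of_le zero_le_one]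
      exact Set.Icc_subset_Icc le_rfl (by linarith)
    have hsubB : Set.uIcc (1 - M) 1 ⊆ Set.uIcc (0:ℝ) 1 := by
      rw [Set.uIcc_of_le (by linarith : 1 - M ≤ (1:ℝ)), Set.uIcc_of_le zero_le_one]
      exact Set.Icc_subset_Icc (by linarith) le_rfl
    have iA := hint.mono_set hsubA
    have iB := hint.mono_set hsubB
    have hsplit : (∫ s in (0:ℝ)..1,
        (t - s) ^ (-α) * Real.exp (-xn ^ 2 / (4 * (t - s))) * (1 - s) ^ (-a))
        = (∫ s in (0:ℝ)..(1-M),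
            (t - s) ^ (-α) * Real.exp (-xn ^ 2 / (4 * (t - s))) * (1 - s) ^ (-a))
          + (∫ s in (1-M)..(1:ℝ),
            (t - s) ^ (-α) * Real.exp (-xn ^ 2 / (4 * (t - s))) * (1 - s) ^ (-a)) := by
      rw [integral_add_adjacent_intervals iA iB]
    -- Part 1
    have hbcont : ContinuousOn (fun s : ℝ => (1 - s) ^ (-α - a)) (Set.uIcc 0 (1 - M)) := by
      apply (continuousOn_const.sub continuousOn_id).rpow_const
      intro s hs
      left
      rw [Set.uIcc_of_le (by linarith : (0:ℝ) ≤ 1 - M)] at hs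
      have h2 := hs.2
      show (1:ℝ) - s ≠ 0
      intro h
      linarith
    have hbintA : IntervalIntegrable (fun s : ℝ => (1 - s) ^ (-α - a)) volume 0 (1 - M) :=
      hbcont.intervalIntegrable
    have hmono1 := integral_mono_on (by linarith : (0:ℝ) ≤ 1 - M) iA hbintA
      (fun s hs => aux_P1 a α t xn ha0 hα ht1 s ⟨hs.1, by linarith [hs.2]⟩)
    have hval1 : (∫ s in (0:ℝ)..(1-M), (1 - s) ^ (-α - a)) = (1 - X) / (1 - α - a) := by
      rw [show (∫ s in (0:ℝ)..(1-M), (1 - s) ^ (-α - a))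
        = ∫ x in (1-(1-M))..(1-(0:ℝ)), x ^ (-α - a) from
          integral_comp_sub_left (fun x : ℝ => x ^ (-α - a)) 1]
      rw [show (1 - (1-M)) = M by ring, show (1 - (0:ℝ)) = 1 by ring]
      rw [integral_rpow (Or.inr ⟨by intro h; linarith,
        by rw [Set.uIcc_of_le hM1]; intro h; exact absurd h.1 (by linarith)⟩)]
      rw [Real.one_rpow, show -α - a + 1 = 1 - α - a by ring, hX_def]
    -- Part 2
    have hbB : IntervalIntegrable (fun s : ℝ => (K * M ^ (-α)) * (1 - s) ^ (-a))
        volume (1-M) 1 := by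
      have hsub' : Set.uIcc (1 - M) 1 ⊆ Set.uIcc (0:ℝ) 1 := hsubB
      exact ((aux_int_one_sub a ha1).mono_set hsub').const_mul _
    have hpoint : ∀ s ∈ Set.Icc (1-M) (1:ℝ),
        (t - s) ^ (-α) * Real.exp (-xn ^ 2 / (4 * (t - s))) * (1 - s) ^ (-a) ≤
          (K * M ^ (-α)) * (1 - s) ^ (-a) := by
      intro s hs
      have h1s0 : (0:ℝ) ≤ 1 - s := by linarith [hs.2]
      have hts0 : 0 < t - s := by linarith [hs.2]
      have hkey : (t - s) ^ (-α) * Real.exp (-xn ^ 2 / (4 * (t - s))) ≤ K * M ^ (-α) := by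
        rcases le_total (xn ^ 2) (t - 1) with hcase | hcase
        · have hMε : M = t - 1 := by rw [hM_def]; exact max_eq_left hcase
          have e1 : (t - s) ^ (-α) ≤ (t - 1) ^ (-α) :=
            Real.rpow_le_rpow_of_nonpos (by linarith) (by linarith [hs.2]) (by linarith)
          have e2 : Real.exp (-xn ^ 2 / (4 * (t - s))) ≤ 1 := by
            apply Real.exp_le_one_iff.2
            rw [neg_div]
            simp only [neg_nonpos]
            positivity
          have hMa : (0:ℝ) ≤ M ^ (-α) := Real.rpow_nonneg hM0.le _
          calc (t - s) ^ (-α) * Real.exp (-xn ^ 2 / (4 * (t - s)))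
              ≤ (t - 1) ^ (-α) * 1 :=
                mul_le_mul e1 e2 (Real.exp_pos _).le (Real.rpow_nonneg (by linarith) _)
            _ = M ^ (-α) := by rw [hMε]; ring
            _ ≤ K * M ^ (-α) := by nlinarith [mul_nonneg (sub_nonneg.2 hK1) hMa]
        · have hMx : M = xn ^ 2 := by rw [hM_def]; exact max_eq_right hcase
          have := aux_kernel_bound α hα hts0 (by positivity : (0:ℝ) < xn ^ 2)
          calc (t - s) ^ (-α) * Real.exp (-xn ^ 2 / (4 * (t - s)))
              ≤ (α ^ α * 4 ^ α) * (xn ^ 2) ^ (-α) := this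
            _ ≤ K * M ^ (-α) := by
                rw [hMx, hK_def]
                have hnn : (0:ℝ) ≤ (xn ^ 2) ^ (-α) := Real.rpow_nonneg (by positivity) _
                nlinarith [hnn]
      exact mul_le_mul_of_nonneg_right hkey (Real.rpow_nonneg h1s0 _)
    have hmono2 := integral_mono_on (by linarith : 1 - M ≤ (1:ℝ)) iB hbB hpoint
    have hval2 : (∫ s in (1-M)..(1:ℝ), (K * M ^ (-α)) * (1 - s) ^ (-a))
        = K * M ^ (-α) * (M ^ (1 - a) / (1 - a)) := by
      rw [intervalIntegral.integral_const_mul]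
      congr 1
      rw [show (∫ s in (1-M)..(1:ℝ), (1 - s) ^ (-a))
        = ∫ x in (1-(1:ℝ))..(1-(1-M)), x ^ (-a) from
          integral_comp_sub_left (fun x : ℝ => x ^ (-a)) 1]
      rw [show (1 - (1:ℝ)) = 0 by ring, show (1 - (1-M)) = M by ring]
      rw [integral_rpow (Or.inl (by linarith : (-1:ℝ) < -a))]
      rw [Real.zero_rpow (by intro h; linarith : -a + 1 ≠ 0),
        show -a + 1 = 1 - a by ring]
      ring
    rw [hval1] at hmono1
    rw [hval2] at hmono2
    -- combine
    have hXM : M ^ (-α) * M ^ (1 - a) = X := by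
      rw [← Real.rpow_add hM0, hX_def]
      congr 1
      ring
    have hb1 : (1 - X) / (1 - α - a) ≤ X / (α + a - 1) := by
      have e : (1 - X) / (1 - α - a) = (X - 1) / (α + a - 1) := by
        rw [div_eq_div_iff (by linarith) (by linarith)]; ring
      rw [e]
      exact (div_le_div_iff_of_pos_right hd).mpr (by linarith)
    have hb2 : K * M ^ (-α) * (M ^ (1 - a) / (1 - a)) = (K / (1 - a)) * X := by
      rw [← hXM]; ring
    rw [hsplit]
    have hfin : X / (α + a - 1) + (K / (1 - a)) * X ≤ c * X := by
      have : X / (α + a - 1) + (K / (1 - a)) * X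
          = (1 / (α + a - 1) + K / (1 - a)) * X := by ring
      rw [this]
      apply mul_le_mul_of_nonneg_right _ hX0.le
      rw [hc_def]
      linarith
    linarith [hmono1, hmono2, hb1, hb2.le, hb2.ge, hfin]


theorem stmt_11 (a α : ℝ) (ha0 : 0 < a) (ha1 : a < 1) (hα : 0 < α)
    (hα1 : α ≠ 1) (hne : α + a ≠ 1) :
    ∃ c : ℝ, 1 < c ∧ ∀ t xn : ℝ, 1 < t → t < 5/4 → 0 < xn → xn < 1/2 →
      (α + a > 1 →
        c⁻¹ * (max (t - 1) (xn ^ 2)) ^ (1 - α - a) ≤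
          (∫ s in (0:ℝ)..1,
            (t - s) ^ (-α) * Real.exp (-xn ^ 2 / (4 * (t - s))) * (1 - s) ^ (-a)) ∧
        (∫ s in (0:ℝ)..1,
            (t - s) ^ (-α) * Real.exp (-xn ^ 2 / (4 * (t - s))) * (1 - s) ^ (-a)) ≤
          c * (max (t - 1) (xn ^ 2)) ^ (1 - α - a)) ∧
      (α + a < 1 →
        c⁻¹ ≤ (∫ s in (0:ℝ)..1,
            (t - s) ^ (-α) * Real.exp (-xn ^ 2 / (4 * (t - s))) * (1 - s) ^ (-a)) ∧
        (∫ s in (0:ℝ)..1,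
            (t - s) ^ (-α) * Real.exp (-xn ^ 2 / (4 * (t - s))) * (1 - s) ^ (-a)) ≤ c) := by
  rcases hne.lt_or_gt with hlt | hgt
  · obtain ⟨c, hc1, hc⟩ := caseB a α ha0 ha1 hα hlt
    refine ⟨c, hc1, ?_⟩
    intro t xn ht1 ht2 hx0 hx2
    exact ⟨fun h => absurd h (by linarith), fun _ => hc t xn ht1 ht2 hx0 hx2⟩
  · obtain ⟨c, hc1, hc⟩ := caseA a α ha0 ha1 hα hgt
    refine ⟨c, hc1, ?_⟩
    intro t xn ht1 ht2 hx0 hx2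
    exact ⟨fun _ => hc t xn ht1 ht2 hx0 hx2, fun h => absurd h (by linarith)⟩
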